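/- Let ω : [0,1] → ℝ^d be a C¹ path, let I = (i₁,…,i_k) be a word in {1,…,d}, and let 0 ≤ s ≤ t ≤ 1. Then the sum over all permutations σ ∈ S_k of Sig(ω)_{s,t}^{(σ(I))} equals ∏_{j=1}^k (ω^{i_j}(t) − ω^{i_j}(s)). -/

import Mathlib

open MeasureTheory

/-- The signature term of a path `ω : ℝ → ℝ^d` over `[s,t]` indexed by the word
`I : Fin k → Fin d`, as the iterated integral over the open simplex. -/
noncomputable def sigTerm {d k : ℕ} (ω : ℝ → Fin d → ℝ) (s t : ℝ)
    (I : Fin k → Fin d) : ℝ :=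
  ∫ u in {u : Fin k → ℝ | StrictMono u ∧ ∀ j, u j ∈ Set.Ioo s t},
    ∏ j, deriv (fun r => ω r (I j)) (u j)

section Aux

open Set

/-- A strictly monotone permutation of `Fin k` is the identity (pointwise). -/
lemma strictMono_perm_apply_eq {k : ℕ} (π : Equiv.Perm (Fin k))
    (h : StrictMono (π : Fin k → Fin k)) (x : Fin k) : π x = x := by
  haveI : WellFoundedLT (Fin k) := inferInstance
  have : (π : Fin k → Fin k) = (id : Fin k → Fin k) :=
    (h.range_inj strictMono_id).1
      (by rw [Set.range_eq_univ.2 π.surjective, Set.range_id])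
  exact congrFun this x

/-- Non-injective tuples form a null set. -/
lemma volume_not_injective_eq_zero {k : ℕ} :
    volume {u : Fin k → ℝ | ¬ Function.Injective u} = 0 := by
  have h1 : {u : Fin k → ℝ | ¬ Function.Injective u} ⊆
      ⋃ (p : Fin k × Fin k) (_ : p.1 ≠ p.2), {u : Fin k → ℝ | u p.1 = u p.2} := by
    intro u hu
    simp only [Function.Injective, not_forall] at hu
    obtain ⟨a, b, hab, hne⟩ := hu
    exact Set.mem_iUnion₂.2 ⟨(a, b), hne, hab⟩
  refine measure_mono_null h1 (measure_iUnion_null fun p => measure_iUnion_null fun hp => ?_)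
  have heq : {u : Fin k → ℝ | u p.1 = u p.2} =
      (LinearMap.ker ((LinearMap.proj p.1 : (Fin k → ℝ) →ₗ[ℝ] ℝ) - LinearMap.proj p.2) :
        Set (Fin k → ℝ)) := by
    ext u
    simp [LinearMap.mem_ker, sub_eq_zero]
  rw [heq]
  apply Measure.addHaar_submodule
  intro htop
  have hmem : (Pi.single p.1 (1:ℝ)) ∈
      LinearMap.ker ((LinearMap.proj p.1 : (Fin k → ℝ) →ₗ[ℝ] ℝ) - LinearMap.proj p.2) := by
    rw [htop]; trivial
  simp only [LinearMap.mem_ker, LinearMap.sub_apply, LinearMap.proj_apply, sub_eq_zero,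
    Pi.single_eq_same, Pi.single_eq_of_ne (Ne.symm hp)] at hmem
  exact one_ne_zero hmem

/-- Fubini over the open cube. -/
lemma integral_cube_prod_eq_prod {k : ℕ} (g : Fin k → ℝ → ℝ) (s t : ℝ) :
    ∫ u in Set.pi Set.univ (fun _ : Fin k => Set.Ioo s t), ∏ j, g j (u j)
      = ∏ j, ∫ x in Set.Ioo s t, g j x := by
  have hmeas : MeasurableSet (Set.pi Set.univ (fun _ : Fin k => Set.Ioo s t)) :=
    MeasurableSet.univ_pi fun _ => measurableSet_Ioo
  rw [← integral_indicator hmeas]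
  have hind : ∀ u : Fin k → ℝ,
      (Set.pi Set.univ (fun _ : Fin k => Set.Ioo s t)).indicator (fun u => ∏ j, g j (u j)) u
        = ∏ j, (Set.Ioo s t).indicator (g j) (u j) := by
    intro u
    by_cases h : u ∈ Set.pi Set.univ (fun _ : Fin k => Set.Ioo s t)
    · rw [Set.indicator_of_mem h]
      exact Finset.prod_congr rfl fun j _ =>
        (Set.indicator_of_mem (h j (Set.mem_univ j)) _).symm
    · rw [Set.indicator_of_notMem h]
      rw [Set.mem_univ_pi, not_forall] at h
      obtain ⟨j, hj⟩ := h
      exact (Finset.prod_eq_zero (Finset.mem_univ j)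
        (Set.indicator_of_notMem hj _)).symm
  simp_rw [hind]
  rw [MeasureTheory.integral_fin_nat_prod_volume_eq_prod
    (f := fun j => (Set.Ioo s t).indicator (g j))]
  exact Finset.prod_congr rfl fun j _ => integral_indicator measurableSet_Ioo

/-- Change of variables by a permutation of the coordinates. -/
lemma setIntegral_perm {k : ℕ} (σ : Equiv.Perm (Fin k)) (g : Fin k → ℝ → ℝ)
    (S : Set (Fin k → ℝ)) :
    ∫ v in S, ∏ j, g (σ j) (v j) =
      ∫ u in {u : Fin k → ℝ | u ∘ σ ∈ S}, ∏ j, g j (u j) := by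
  set T : (Fin k → ℝ) ≃ᵐ (Fin k → ℝ) :=
    MeasurableEquiv.piCongrLeft (fun _ => ℝ) σ.symm with hTdef
  have hT : MeasurePreserving T volume volume :=
    volume_measurePreserving_piCongrLeft _ σ.symm
  have hTapp : ∀ u : Fin k → ℝ, T u = u ∘ σ := by
    intro u
    funext m
    have := Equiv.piCongrLeft_apply_apply (fun _ => ℝ) σ.symm u (σ m)
    simpa [hTdef, MeasurableEquiv.coe_piCongrLeft] using this
  have key := hT.setIntegral_preimage_emb T.measurableEmbedding
    (fun v => ∏ j, g (σ j) (v j)) S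
  rw [← key]
  have hset : T ⁻¹' S = {u : Fin k → ℝ | u ∘ σ ∈ S} := by
    ext u; simp [Set.mem_preimage, hTapp]
  rw [hset]
  apply integral_congr_ae
  filter_upwards with u
  simp only [hTapp]
  exact (Equiv.prod_comp σ (fun j => g j (u j)))

end Aux

/-- Shuffle identity: the sum over all permutations `σ` of `Sig(ω)_{s,t}^{(σ(I))}`
equals the product of increments `∏_j (ω^{i_j}(t) − ω^{i_j}(s))`. -/
theorem symmetrized_signature_eq_product {d k : ℕ}
    (ω : ℝ → Fin d → ℝ) (hω : ContDiff ℝ 1 ω)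
    (I : Fin k → Fin d) (s t : ℝ) (hs : 0 ≤ s) (hst : s ≤ t) (ht : t ≤ 1) :
    ∑ σ : Equiv.Perm (Fin k), sigTerm ω s t (I ∘ σ) =
      ∏ j, (ω t (I j) - ω s (I j)) := by
  classical
  -- the coordinate derivatives
  set f : Fin d → ℝ → ℝ := fun i => deriv (fun r => ω r i) with hfdef
  have hcoord : ∀ i : Fin d, ContDiff ℝ 1 (fun r => ω r i) := fun i =>
    (ContinuousLinearMap.proj i : (Fin d → ℝ) →L[ℝ] ℝ).contDiff.comp hω
  have hfcont : ∀ i, Continuous (f i) := fun i =>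
    (hcoord i).continuous_deriv le_rfl
  -- the integrand
  set F : (Fin k → ℝ) → ℝ := fun u => ∏ j, f (I j) (u j) with hFdef
  have hFcont : Continuous F := by
    apply continuous_finset_prod
    exact fun j _ => (hfcont (I j)).comp (continuous_apply j)
  -- the simplices
  set A : Equiv.Perm (Fin k) → Set (Fin k → ℝ) :=
    fun σ => {u | StrictMono (u ∘ σ) ∧ ∀ j, u j ∈ Set.Ioo s t} with hAdef
  -- Step 1: change of variables
  have step1 : ∀ σ : Equiv.Perm (Fin k), sigTerm ω s t (I ∘ σ) = ∫ u in A σ, F u := by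
    intro σ
    have h1 : sigTerm ω s t (I ∘ σ) =
        ∫ v in {u : Fin k → ℝ | StrictMono u ∧ ∀ j, u j ∈ Set.Ioo s t},
          ∏ j, f (I (σ j)) (v j) := rfl
    rw [h1, setIntegral_perm σ (fun j => f (I j))]
    have hseteq : {u : Fin k → ℝ |
        u ∘ σ ∈ {v : Fin k → ℝ | StrictMono v ∧ ∀ j, v j ∈ Set.Ioo s t}} = A σ := by
      ext u
      simp only [Set.mem_setOf_eq, Function.comp, hAdef]
      refine and_congr Iff.rfl ⟨fun h j => ?_, fun h j => h (σ j)⟩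
      have := h (σ.symm j)
      simpa using this
    rw [hseteq]
  -- measurability of the simplices
  have hA : ∀ σ, MeasurableSet (A σ) := by
    intro σ
    have h1 : A σ = {u : Fin k → ℝ | StrictMono (u ∘ σ)} ∩
        {u | ∀ j, u j ∈ Set.Ioo s t} := by
      ext u; simp [hAdef, Set.mem_setOf_eq, Set.mem_inter_iff]
    rw [h1]
    refine MeasurableSet.inter ?_ ?_
    · have h2 : {u : Fin k → ℝ | StrictMono (u ∘ σ)} =
          ⋂ (p : Fin k × Fin k), ⋂ (_ : p.1 < p.2), {u : Fin k → ℝ | u (σ p.1) < u (σ p.2)} := by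
        ext u
        simp only [Set.mem_setOf_eq, Set.mem_iInter, StrictMono, Function.comp, Prod.forall]
      rw [h2]
      exact MeasurableSet.iInter fun p => MeasurableSet.iInter fun _ =>
        measurableSet_lt (measurable_pi_apply _) (measurable_pi_apply _)
    · have h3 : {u : Fin k → ℝ | ∀ j, u j ∈ Set.Ioo s t} =
          Set.pi Set.univ (fun _ : Fin k => Set.Ioo s t) := by
        ext u; simp [Set.mem_univ_pi]
      rw [h3]
      exact MeasurableSet.univ_pi fun _ => measurableSet_Ioo
  -- integrability
  have hinteg : ∀ σ, IntegrableOn F (A σ) := by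
    intro σ
    have hsub : A σ ⊆ Set.pi Set.univ (fun _ : Fin k => Set.Icc s t) := by
      intro u hu
      exact fun j _ => Set.Ioo_subset_Icc_self (hu.2 j)
    exact (hFcont.continuousOn.integrableOn_compact
      (isCompact_univ_pi fun _ => isCompact_Icc)).mono_set hsub
  -- pairwise disjointness
  have hdisj : Pairwise (Function.onFun Disjoint A) := by
    intro σ τ hne
    rw [Function.onFun, Set.disjoint_left]
    rintro u ⟨hσ, _⟩ ⟨hτ, _⟩
    apply hne
    set π : Equiv.Perm (Fin k) := σ.trans τ.symm with hπdef
    have hπmono : StrictMono (π : Fin k → Fin k) := by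
      intro a b hab
      have hval : u (σ a) < u (σ b) := hσ hab
      have := (hτ.lt_iff_lt (a := π a) (b := π b))
      rw [← this]
      show u (τ (τ.symm (σ a))) < u (τ (τ.symm (σ b)))
      simpa using hval
    have hid : ∀ x, π x = x := strictMono_perm_apply_eq π hπmono
    ext x
    have := hid x
    simp only [hπdef, Equiv.trans_apply] at this
    have : σ x = τ x := by
      have h2 := congrArg τ this
      simpa using h2
    exact congrArg Fin.val this
  -- union identity
  have hUnion : ⋃ σ : Equiv.Perm (Fin k), A σ =
      {u : Fin k → ℝ | Function.Injective u} ∩ {u | ∀ j, u j ∈ Set.Ioo s t} := by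
    ext u
    simp only [Set.mem_iUnion, Set.mem_inter_iff, Set.mem_setOf_eq, hAdef]
    constructor
    · rintro ⟨σ, hmono, hioo⟩
      refine ⟨?_, hioo⟩
      have hinj : Function.Injective (u ∘ σ) := hmono.injective
      have heq : u = (u ∘ σ) ∘ (σ.symm : Fin k → Fin k) := by
        funext x; simp
      rw [heq]
      exact hinj.comp σ.symm.injective
    · rintro ⟨hinj, hioo⟩
      refine ⟨Tuple.sort u, ?_, hioo⟩
      exact (Tuple.monotone_sort u).strictMono_of_injective
        (hinj.comp (Tuple.sort u).injective)
  -- assemble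
  calc ∑ σ : Equiv.Perm (Fin k), sigTerm ω s t (I ∘ σ)
      = ∑ σ : Equiv.Perm (Fin k), ∫ u in A σ, F u :=
        Finset.sum_congr rfl fun σ _ => step1 σ
    _ = ∫ u in ⋃ σ : Equiv.Perm (Fin k), A σ, F u :=
        (integral_iUnion_fintype hA hdisj hinteg).symm
    _ = ∫ u in Set.pi Set.univ (fun _ : Fin k => Set.Ioo s t), F u := by
        apply setIntegral_congr_set
        rw [hUnion]
        have hcube : {u : Fin k → ℝ | ∀ j, u j ∈ Set.Ioo s t} =
            Set.pi Set.univ (fun _ : Fin k => Set.Ioo s t) := by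
          ext u; simp [Set.mem_univ_pi]
        rw [hcube]
        rw [MeasureTheory.ae_eq_set]
        constructor
        · simp [Set.diff_eq_empty.2 Set.inter_subset_right]
        · refine measure_mono_null ?_ (volume_not_injective_eq_zero (k := k))
          intro u hu
          simp only [Set.mem_diff, Set.mem_inter_iff, Set.mem_setOf_eq, not_and] at hu ⊢
          exact fun hinj => hu.2 hinj hu.1
    _ = ∏ j, ∫ x in Set.Ioo s t, f (I j) x :=
        integral_cube_prod_eq_prod (fun j => f (I j)) s t
    _ = ∏ j, (ω t (I j) - ω s (I j)) := by
        refine Finset.prod_congr rfl fun j _ => ?_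
        rw [hfdef]
        rw [← integral_Ioc_eq_integral_Ioo, ← intervalIntegral.integral_of_le hst]
        exact intervalIntegral.integral_deriv_eq_sub
          (fun x _ => ((hcoord (I j)).differentiable one_ne_zero).differentiableAt)
          (((hcoord (I j)).continuous_deriv le_rfl).intervalIntegrable s t)
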